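/- Let M₁ ∈ C₆⁺ and M₂ ∈ C₄⁻ with M₂ different from the complement of M₁ in the set of 10 even 2-characteristics. Then |M₁ ∩ M₂| ∈ {2, 3}, and: (1) if |M₁ ∩ M₂| = 3 then M₁ △ M₂ ∈ C₄⁻; (2) if |M₁ ∩ M₂| = 2 then M₁ △ M₂ ∈ C₆⁺. -/

import Mathlib

open scoped Classical

/-- A 2-characteristic: a pair `m = (m', m'')` with `m', m'' ∈ (ZMod 2)²`. -/
abbrev Char2 : Type := (ZMod 2 × ZMod 2) × (ZMod 2 × ZMod 2)

/-- `m` is even if `m'₁·m''₁ + m'₂·m''₂ = 0` in `ZMod 2`. -/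
def IsEvenChar (m : Char2) : Prop := m.1.1 * m.2.1 + m.1.2 * m.2.2 = 0

/-- `m` is odd if it is not even. -/
def IsOddChar (m : Char2) : Prop := ¬ IsEvenChar m

/-- The finset of all (10) even 2-characteristics. -/
noncomputable def EvenChars : Finset Char2 := Finset.univ.filter IsEvenChar

/-- `C₃⁻`: 3-element sets of even characteristics whose sum is odd. -/
def C3minus (M : Finset Char2) : Prop :=
  M ⊆ EvenChars ∧ M.card = 3 ∧ IsOddChar (∑ m ∈ M, m)

/-- `C₃⁺`: 3-element sets of even characteristics whose sum is even. -/
def C3plus (M : Finset Char2) : Prop :=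
  M ⊆ EvenChars ∧ M.card = 3 ∧ IsEvenChar (∑ m ∈ M, m)

/-- `C₄⁻`: 4-element sets of even characteristics all of whose 3-element subsets lie in `C₃⁻`. -/
def C4minus (M : Finset Char2) : Prop :=
  M ⊆ EvenChars ∧ M.card = 4 ∧ ∀ T ⊆ M, T.card = 3 → C3minus T

/-- `C₄⁺`: 4-element sets of even characteristics all of whose 3-element subsets lie in `C₃⁺`. -/
def C4plus (M : Finset Char2) : Prop :=
  M ⊆ EvenChars ∧ M.card = 4 ∧ ∀ T ⊆ M, T.card = 3 → C3plus T

/-- `C₅⁻`: 5-element sets of even characteristics containing exactly one element of `C₄⁻`. -/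
def C5minus (M : Finset Char2) : Prop :=
  M ⊆ EvenChars ∧ M.card = 5 ∧ ∃! T, T ⊆ M ∧ C4minus T

/-- `C₅⁺`: 5-element sets of even characteristics containing exactly one element of `C₄⁺`. -/
def C5plus (M : Finset Char2) : Prop :=
  M ⊆ EvenChars ∧ M.card = 5 ∧ ∃! T, T ⊆ M ∧ C4plus T

/-- `C₆⁻`: 6-element sets of even characteristics whose complement lies in `C₄⁺`. -/
def C6minus (M : Finset Char2) : Prop :=
  M ⊆ EvenChars ∧ M.card = 6 ∧ C4plus (EvenChars \ M)

/-- `C₆⁺`: 6-element sets of even characteristics whose complement lies in `C₄⁻`. -/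
def C6plus (M : Finset Char2) : Prop :=
  M ⊆ EvenChars ∧ M.card = 6 ∧ C4minus (EvenChars \ M)

/- ### Auxiliary machinery -/

instance decIsEvenChar : DecidablePred IsEvenChar := fun m =>
  inferInstanceAs (Decidable (m.1.1 * m.2.1 + m.1.2 * m.2.2 = 0))

instance decIsOddChar : DecidablePred IsOddChar := fun m =>
  inferInstanceAs (Decidable (¬ IsEvenChar m))

/-- Explicit list of the 10 even characteristics. -/
def evList : List Char2 := [(((0,0),(0,0))), (((0,0),(0,1))), (((0,0),(1,0))), (((0,0),(1,1))), (((0,1),(0,0))), (((0,1),(1,0))), (((1,0),(0,0))), (((1,0),(0,1))), (((1,1),(0,0))), (((1,1),(1,1)))]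

lemma evList_nodup : evList.Nodup := by decide

lemma mem_evList {a : Char2} : a ∈ evList ↔ IsEvenChar a := by revert a; decide

lemma mem_EvenChars {a : Char2} : a ∈ EvenChars ↔ IsEvenChar a := by
  simp [EvenChars]

/-- Canonical list of a finset of characteristics. -/
noncomputable def L (M : Finset Char2) : List Char2 := evList.filter (· ∈ M)

lemma mem_L {M : Finset Char2} (hM : M ⊆ EvenChars) {a : Char2} : a ∈ L M ↔ a ∈ M := by
  simp only [L, List.mem_filter, decide_eq_true_eq]
  exact ⟨And.right, fun h => ⟨mem_evList.2 (mem_EvenChars.1 (hM h)), h⟩⟩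

lemma nodup_L (M : Finset Char2) : (L M).Nodup := evList_nodup.filter _

lemma toFinset_L {M : Finset Char2} (hM : M ⊆ EvenChars) : (L M).toFinset = M := by
  ext a; rw [List.mem_toFinset, mem_L hM]

lemma length_L {M : Finset Char2} (hM : M ⊆ EvenChars) : (L M).length = M.card := by
  rw [← List.toFinset_card_of_nodup (nodup_L M), toFinset_L hM]

lemma sum_nodup_list {t : List Char2} (h : t.Nodup) : ∑ m ∈ t.toFinset, m = t.sum := by
  rw [List.sum_toFinset _ h]; simp

lemma L_inj {M N : Finset Char2} (hM : M ⊆ EvenChars) (hN : N ⊆ EvenChars)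
    (h : L M = L N) : M = N := by
  rw [← toFinset_L hM, ← toFinset_L hN, h]

lemma L_sublist (M : Finset Char2) : List.Sublist (L M) evList := List.filter_sublist

/-- The essential part of `C4minus`. -/
def Odd3 (M : Finset Char2) : Prop :=
  ∀ T ⊆ M, T.card = 3 → IsOddChar (∑ m ∈ T, m)

lemma C4minus_iff {M : Finset Char2} :
    C4minus M ↔ M ⊆ EvenChars ∧ M.card = 4 ∧ Odd3 M := by
  unfold C4minus C3minus Odd3
  constructor
  · rintro ⟨hs, hc, h⟩; exact ⟨hs, hc, fun T hT h3 => (h T hT h3).2.2⟩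
  · rintro ⟨hs, hc, h⟩; exact ⟨hs, hc, fun T hT h3 => ⟨hT.trans hs, h3, h T hT h3⟩⟩

/-- List version of `Odd3`. -/
def c4' (l : List Char2) : Prop := ∀ t ∈ l.sublistsLen 3, IsOddChar t.sum

instance : DecidablePred c4' := fun l => by unfold c4'; infer_instance

lemma c4'_iff {M : Finset Char2} (hM : M ⊆ EvenChars) : c4' (L M) ↔ Odd3 M := by
  constructor
  · intro h T hT h3
    have hTE : T ⊆ EvenChars := hT.trans hM
    have hsub : List.Sublist (L T) (L M) := by
      refine List.monotone_filter_right _ (fun a ha => ?_)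
      simp only [decide_eq_true_eq] at ha ⊢
      exact hT ha
    have hlen : (L T).length = 3 := by rw [length_L hTE, h3]
    have := h (L T) (List.mem_sublistsLen.2 ⟨hsub, hlen⟩)
    rwa [← sum_nodup_list (nodup_L T), toFinset_L hTE] at this
  · intro h t ht
    obtain ⟨hsub, hlen⟩ := List.mem_sublistsLen.1 ht
    have hnd : t.Nodup := hsub.nodup (nodup_L M)
    have hT : t.toFinset ⊆ M := fun a ha =>
      (mem_L hM).1 (hsub.subset (List.mem_toFinset.1 ha))
    have hc : t.toFinset.card = 3 := by rw [List.toFinset_card_of_nodup hnd, hlen]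
    have := h t.toFinset hT hc
    rwa [sum_nodup_list hnd] at this

set_option maxRecDepth 2000000 in
lemma key : ∀ m₁ ∈ evList.sublistsLen 6, ∀ m₂ ∈ evList.sublistsLen 4,
    c4' (evList.filter (fun a => ¬ a ∈ m₁)) → c4' m₂ →
    evList.filter (fun a => ¬ a ∈ m₁) ≠ m₂ →
    ((evList.filter (fun a => a ∈ m₁ ∧ a ∈ m₂)).length = 2 ∨
     (evList.filter (fun a => a ∈ m₁ ∧ a ∈ m₂)).length = 3) ∧
    ((evList.filter (fun a => a ∈ m₁ ∧ a ∈ m₂)).length = 3 →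
      (evList.filter (fun a => (a ∈ m₁ ∨ a ∈ m₂) ∧ ¬ (a ∈ m₁ ∧ a ∈ m₂))).length = 4 ∧
      c4' (evList.filter (fun a => (a ∈ m₁ ∨ a ∈ m₂) ∧ ¬ (a ∈ m₁ ∧ a ∈ m₂)))) ∧
    ((evList.filter (fun a => a ∈ m₁ ∧ a ∈ m₂)).length = 2 →
      (evList.filter (fun a => (a ∈ m₁ ∨ a ∈ m₂) ∧ ¬ (a ∈ m₁ ∧ a ∈ m₂))).length = 6 ∧
      c4' (evList.filter (fun a => ¬ ((a ∈ m₁ ∨ a ∈ m₂) ∧ ¬ (a ∈ m₁ ∧ a ∈ m₂))))) := by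
  decide

theorem C6plus_C4minus_symmDiff_cases (M₁ M₂ : Finset Char2)
    (h₁ : C6plus M₁) (h₂ : C4minus M₂) (hne : M₂ ≠ EvenChars \ M₁) :
    ((M₁ ∩ M₂).card = 2 ∨ (M₁ ∩ M₂).card = 3) ∧
    ((M₁ ∩ M₂).card = 3 → C4minus ((M₁ ∪ M₂) \ (M₁ ∩ M₂))) ∧
    ((M₁ ∩ M₂).card = 2 → C6plus ((M₁ ∪ M₂) \ (M₁ ∩ M₂))) := by
  obtain ⟨hE₁, hc₁, hcomp⟩ := h₁
  obtain ⟨hE₂, hc₂, hO₂⟩ := C4minus_iff.1 h₂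
  have hEc : (EvenChars \ M₁) ⊆ EvenChars := Finset.sdiff_subset
  -- complement list
  have hcompl : evList.filter (fun a => ¬ a ∈ L M₁) = L (EvenChars \ M₁) := by
    refine List.filter_congr (fun a ha => ?_)
    simp only [decide_eq_decide, mem_L hE₁, Finset.mem_sdiff]
    exact ⟨fun h => ⟨mem_EvenChars.2 (mem_evList.1 ha), h⟩, fun h => h.2⟩
  -- intersection and symmetric difference lists
  have hintE : (M₁ ∩ M₂) ⊆ EvenChars := Finset.inter_subset_left.trans hE₁
  have hSE : ((M₁ ∪ M₂) \ (M₁ ∩ M₂)) ⊆ EvenChars :=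
    Finset.sdiff_subset.trans (Finset.union_subset hE₁ hE₂)
  have hint : evList.filter (fun a => a ∈ L M₁ ∧ a ∈ L M₂) = L (M₁ ∩ M₂) := by
    refine List.filter_congr (fun a ha => ?_)
    simp only [decide_eq_decide, mem_L hE₁, mem_L hE₂, mem_L hintE, Finset.mem_inter]
  have hsd : evList.filter (fun a => (a ∈ L M₁ ∨ a ∈ L M₂) ∧ ¬ (a ∈ L M₁ ∧ a ∈ L M₂))
      = L ((M₁ ∪ M₂) \ (M₁ ∩ M₂)) := by
    refine List.filter_congr (fun a ha => ?_)
    simp only [decide_eq_decide, mem_L hE₁, mem_L hE₂, mem_L hSE, Finset.mem_sdiff,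
      Finset.mem_union, Finset.mem_inter]
  -- memberships in sublistsLen
  have hm₁ : L M₁ ∈ evList.sublistsLen 6 :=
    List.mem_sublistsLen.2 ⟨L_sublist M₁, by rw [length_L hE₁, hc₁]⟩
  have hm₂ : L M₂ ∈ evList.sublistsLen 4 :=
    List.mem_sublistsLen.2 ⟨L_sublist M₂, by rw [length_L hE₂, hc₂]⟩
  -- hypotheses of key
  have hc6 : c4' (evList.filter (fun a => ¬ a ∈ L M₁)) := by
    rw [hcompl]
    exact (c4'_iff hEc).2 (C4minus_iff.1 hcomp).2.2
  have hc4 : c4' (L M₂) := (c4'_iff hE₂).2 hO₂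
  have hne' : evList.filter (fun a => ¬ a ∈ L M₁) ≠ L M₂ := by
    rw [hcompl]
    intro h
    exact hne (L_inj hE₂ hEc h.symm)
  obtain ⟨ha, hb, hc⟩ := key (L M₁) hm₁ (L M₂) hm₂ hc6 hc4 hne'
  rw [hint] at ha hb hc
  rw [hsd] at hb hc
  rw [length_L hintE] at ha hb hc
  refine ⟨ha, fun h3 => ?_, fun h2 => ?_⟩
  · obtain ⟨hlen, hc4'⟩ := hb h3
    rw [length_L hSE] at hlen
    exact C4minus_iff.2 ⟨hSE, hlen, (c4'_iff hSE).1 hc4'⟩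
  · obtain ⟨hlen, hc4'⟩ := hc h2
    rw [length_L hSE] at hlen
    have hScE : (EvenChars \ ((M₁ ∪ M₂) \ (M₁ ∩ M₂))) ⊆ EvenChars := Finset.sdiff_subset
    have hcompl2 : evList.filter
        (fun a => ¬ ((a ∈ L M₁ ∨ a ∈ L M₂) ∧ ¬ (a ∈ L M₁ ∧ a ∈ L M₂)))
        = L (EvenChars \ ((M₁ ∪ M₂) \ (M₁ ∩ M₂))) := by
      refine List.filter_congr (fun a ha => ?_)
      simp only [decide_eq_decide, mem_L hE₁, mem_L hE₂, mem_L hScE, Finset.mem_sdiff,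
        Finset.mem_union, Finset.mem_inter]
      constructor
      · intro h; exact ⟨mem_EvenChars.2 (mem_evList.1 ha), h⟩
      · exact And.right
    rw [hcompl2] at hc4'
    have hcard10 : EvenChars.card = 10 := by
      have hE : EvenChars = evList.toFinset := by
        ext a; rw [mem_EvenChars, List.mem_toFinset, mem_evList]
      rw [hE, List.toFinset_card_of_nodup evList_nodup]; rfl
    have hcardc : (EvenChars \ ((M₁ ∪ M₂) \ (M₁ ∩ M₂))).card = 4 := by
      rw [Finset.card_sdiff_of_subset hSE, hcard10, hlen]
    exact ⟨hSE, hlen, C4minus_iff.2 ⟨hScE, hcardc, (c4'_iff hScE).1 hc4'⟩⟩
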